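/- No-go theorem for isotropy: let d ≥ 2 and let (G, δ) be a displacement graph in dimension d with G strongly connected. Then the set of velocities of trajectories of (G, δ) is never ellipsoidal: there is no invertible linear map L : ℝ^d → ℝ^d and no real r > 0 such that the image under L of the set of velocities equals the closed Euclidean ball {u ∈ ℝ^d : ‖u‖₂ ≤ r}. -/

import Mathlib

/-- A path in a directed multigraph with source map `s` and target map `t`:
a nonempty list of edges `e₁ … e_n` with `t eᵢ = s eᵢ₊₁`. -/
def IsPathList {V E : Type*} (s t : E → V) (p : List E) : Prop :=
  p ≠ [] ∧ p.Chain' (fun e f => t e = s f)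

/-- A cycle: a path `e₁ … e_n` with `s e₁ = t e_n` whose vertices
`s e₁, …, s e_n` are pairwise distinct. -/
def IsCycleList {V E : Type*} (s t : E → V) (p : List E) : Prop :=
  ∃ h : p ≠ [], p.Chain' (fun e f => t e = s f) ∧
    s (p.head h) = t (p.getLast h) ∧ (p.map s).Nodup

/-- Regard a vector of `ℤ^d` as a point of Euclidean space `ℝ^d`. -/
def toR {d : ℕ} (x : Fin d → ℤ) : EuclideanSpace ℝ (Fin d) := WithLp.toLp 2 (fun i => (x i : ℝ))

/-- A trajectory: a sequence of edges with `s (f (n+1)) = t (f n)`. -/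
def IsTrajectory {V E : Type*} (s t : E → V) (f : ℕ → E) : Prop :=
  ∀ n : ℕ, s (f (n + 1)) = t (f n)

/-- `u` is the velocity of the trajectory `f`:
`(1/n) · ∑_{k=1}^n δ(f k) → u` as `n → ∞`. -/
def HasVelocity {d : ℕ} {E : Type*} (δ : E → Fin d → ℤ) (f : ℕ → E)
    (u : EuclideanSpace ℝ (Fin d)) : Prop :=
  Filter.Tendsto (fun n : ℕ => (n : ℝ)⁻¹ • ∑ k ∈ Finset.Icc 1 n, toR (δ (f k)))
    Filter.atTop (nhds u)

/-- The set of basic velocities `δ(c)/|c|` of cycles `c`. -/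
def basicVelocities {d : ℕ} {V E : Type*} (s t : E → V) (δ : E → Fin d → ℤ) :
    Set (EuclideanSpace ℝ (Fin d)) :=
  {u | ∃ c : List E, IsCycleList s t c ∧ u = (c.length : ℝ)⁻¹ • toR (c.map δ).sum}

/-- The set of all velocities of trajectories. -/
def velocitySet {d : ℕ} {V E : Type*} (s t : E → V) (δ : E → Fin d → ℤ) :
    Set (EuclideanSpace ℝ (Fin d)) :=
  {u | ∃ f : ℕ → E, IsTrajectory s t f ∧ HasVelocity δ f u}

/-- `p` is a path from vertex `a` to vertex `b`. -/
def PathFrom {V E : Type*} (s t : E → V) (a b : V) (p : List E) : Prop :=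
  ∃ h : p ≠ [], p.Chain' (fun e f => t e = s f) ∧ s (p.head h) = a ∧ t (p.getLast h) = b

/-- Strong connectivity: any vertex can be reached from any vertex by a path. -/
def StronglyConnected {V E : Type*} (s t : E → V) : Prop :=
  ∀ v w : V, ∃ p : List E, PathFrom s t v w p

/-! ### Auxiliary lemmas -/

section Aux

noncomputable def toRhom (d : ℕ) : (Fin d → ℤ) →+ EuclideanSpace ℝ (Fin d) where
  toFun := toR
  map_zero' := by ext i; simp [toR]
  map_add' x y := by ext i; simp [toR]

lemma sum_list_range {M : Type*} [AddCommMonoid M] (h : ℕ → M) (n : ℕ) :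
    ((List.range n).map h).sum = ∑ k ∈ Finset.range n, h k := by
  induction n with
  | zero => simp
  | succ n ih => rw [List.range_succ, Finset.sum_range_succ, List.map_append]; simp [ih]

variable {V E : Type*} (s t : E → V)

lemma dup_decomp : ∀ p : List E, ¬ (p.map s).Nodup →
    ∃ (a : List E) (e : E) (m : List E) (e' : E) (b : List E),
      p = a ++ e :: m ++ e' :: b ∧ s e = s e' := by
  intro p
  induction p with
  | nil => simp
  | cons x q ih =>
    intro h
    rw [List.map_cons, List.nodup_cons] at h
    by_cases hx : s x ∈ q.map s
    · obtain ⟨e', he', hse⟩ := List.mem_map.1 hx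
      obtain ⟨m, b, rfl⟩ := List.append_of_mem he'
      exact ⟨[], x, m, e', b, by simp, hse.symm⟩
    · obtain ⟨a, e, m, e', b, rfl, hse⟩ := ih (fun hn => h ⟨fun hm => hx hm, hn⟩)
      exact ⟨x :: a, e, m, e', b, by simp, hse⟩

lemma extract_cycle : ∀ n (p : List E), p.length ≤ n →
    p.Chain' (fun e f => t e = s f) → ¬ (p.map s).Nodup →
    ∃ (a c b : List E), p = a ++ c ++ b ∧ IsCycleList s t c := by
  intro n
  induction n with
  | zero =>
    intro p hp _ hnd
    exfalso; exact hnd (by rw [List.length_eq_zero_iff.1 (Nat.le_zero.1 hp)]; simp)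
  | succ n ih =>
    intro p hlen hch hnd
    obtain ⟨a, e, m, e', b, rfl, hse⟩ := dup_decomp s _ hnd
    have hinfix : (e :: m).Chain' (fun e f => t e = s f) :=
      hch.infix ⟨a, e' :: b, by simp⟩
    have hclose : t ((e :: m).getLast (by simp)) = s e := by
      have h2 : ((e :: m) ++ e' :: b).Chain' (fun e f => t e = s f) :=
        hch.infix ⟨a, [], by simp⟩
      rw [List.Chain', List.isChain_append] at h2
      have := h2.2.2 ((e :: m).getLast (by simp)) (by
        rw [List.getLast?_eq_getLast (by simp)]; rfl) e' (by simp)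
      rw [this, hse]
    by_cases hnodup : ((e :: m).map s).Nodup
    · exact ⟨a, e :: m, e' :: b, by simp, (by simp : e :: m ≠ []),
        hinfix, by simpa using hclose.symm, hnodup⟩
    · have hlt : (e :: m).length ≤ n := by
        simp only [List.length_append, List.length_cons] at hlen ⊢
        omega
      obtain ⟨a₂, c₂, b₂, heq, hc₂⟩ := ih (e :: m) hlt hinfix hnodup
      exact ⟨a ++ a₂, c₂, b₂ ++ e' :: b, by rw [heq]; simp, hc₂⟩

lemma chain_remove {a c b : List E}
    (h : (a ++ c ++ b).Chain' (fun e f => t e = s f))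
    (hc : IsCycleList s t c) : (a ++ b).Chain' (fun e f => t e = s f) := by
  obtain ⟨hne, _, hclose, _⟩ := hc
  rw [List.append_assoc, List.Chain', List.isChain_append] at h
  obtain ⟨ha, hcb, hJ1⟩ := h
  rw [List.isChain_append] at hcb
  obtain ⟨_, hb, hJ2⟩ := hcb
  rw [List.Chain', List.isChain_append]
  refine ⟨ha, hb, fun x hx y hy => ?_⟩
  have h1 : t x = s (c.head hne) := by
    have := hJ1 x hx (c.head hne) ?_
    · exact this
    · rw [List.head?_append, List.head?_eq_head hne]; rfl
  have h2 : t (c.getLast hne) = s y := by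
    refine hJ2 (c.getLast hne) ?_ y hy
    rw [List.getLast?_eq_getLast hne]; rfl
  rw [h1, hclose, h2]

lemma sum_bound [Fintype V] (g : E → ℝ) (M u : ℝ) (hM0 : 0 ≤ M) (hM : ∀ e, |g e| ≤ M)
    (hcyc : ∀ c : List E, IsCycleList s t c → (c.map g).sum ≤ u * c.length) :
    ∀ n (p : List E), p.length ≤ n → p.Chain' (fun e f => t e = s f) →
      (p.map g).sum ≤ u * p.length + (M + |u|) * (Fintype.card V) := by
  intro n
  induction n using Nat.strong_induction_on with
  | _ n ih =>
  intro p hlen hch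
  by_cases hnd : (p.map s).Nodup
  · have hBV : p.length ≤ Fintype.card V := by
      have := hnd.length_le_card
      simpa using this
    have h1 : (p.map g).sum ≤ p.length * M := by
      have := List.sum_le_card_nsmul (p.map g) M (by
        intro x hx
        obtain ⟨e, _, rfl⟩ := List.mem_map.1 hx
        exact (abs_le.1 (hM e)).2)
      simpa [nsmul_eq_mul] using this
    have hc1 : (p.length : ℝ) ≤ (Fintype.card V : ℝ) := by exact_mod_cast hBV
    have hc0 : (0:ℝ) ≤ (p.length : ℝ) := by positivity
    nlinarith [neg_abs_le u, abs_nonneg u]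
  · rcases n with _ | n
    · exfalso; exact hnd (by rw [List.length_eq_zero_iff.1 (Nat.le_zero.1 hlen)]; simp)
    obtain ⟨a, c, b, rfl, hc⟩ := extract_cycle s t (n+1) p hlen hch hnd
    obtain ⟨hne, -, -, -⟩ := id hc
    have hchab : (a ++ b).Chain' (fun e f => t e = s f) := chain_remove s t hch hc
    have hlenab : (a ++ b).length ≤ n := by
      have hc1 : 1 ≤ c.length := List.length_pos_iff.2 hne
      simp only [List.length_append] at hlen ⊢
      omega
    have hab := ih n (Nat.lt_succ_self n) (a ++ b) hlenab hchab
    have hcb := hcyc c hc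
    have hsum : ((a ++ c ++ b).map g).sum = ((a ++ b).map g).sum + (c.map g).sum := by
      simp [List.sum_append]; ring
    rw [hsum]
    have hlen' : ((a ++ c ++ b).length : ℝ) = ((a++b).length : ℝ) + (c.length : ℝ) := by
      push_cast [List.length_append]; ring
    rw [hlen']
    linarith

lemma basic_finite {d : ℕ} [Fintype V] [Finite E] (δ : E → Fin d → ℤ) :
    (basicVelocities s t δ).Finite := by
  have h : basicVelocities s t δ ⊆
      (fun c : List E => (c.length : ℝ)⁻¹ • toR (c.map δ).sum) ''
        {c : List E | c.length ≤ Fintype.card V} := by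
    rintro x ⟨c, hc, rfl⟩
    refine ⟨c, ?_, rfl⟩
    obtain ⟨-, -, -, hnd⟩ := hc
    have := hnd.length_le_card
    simpa using this
  exact ((List.finite_length_le E (Fintype.card V)).image _).subset h

lemma vel_subset {d : ℕ} [Fintype V] [Fintype E] (δ : E → Fin d → ℤ) :
    velocitySet s t δ ⊆ convexHull ℝ (basicVelocities s t δ) := by
  intro x hx
  by_contra hxc
  obtain ⟨f, htraj, hvel⟩ := hx
  obtain ⟨φ, u, hlt, hux⟩ := geometric_hahn_banach_closed_point
    (convex_convexHull ℝ _) ((basic_finite s t δ).isClosed_convexHull (𝕜 := ℝ)) hxc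
  set g : E → ℝ := fun e => φ (toR (δ e)) with hg
  -- bound for cycles
  have hcyc : ∀ c : List E, IsCycleList s t c → (c.map g).sum ≤ u * c.length := by
    intro c hc
    obtain ⟨hne, -, -, -⟩ := id hc
    have hmem : (c.length : ℝ)⁻¹ • toR (c.map δ).sum ∈ basicVelocities s t δ :=
      ⟨c, hc, rfl⟩
    have hlen0 : (0:ℝ) < c.length := by
      exact_mod_cast List.length_pos_iff.2 hne
    have h1 : φ ((c.length : ℝ)⁻¹ • toR (c.map δ).sum) < u :=
      hlt _ (subset_convexHull ℝ _ hmem)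
    rw [map_smul, smul_eq_mul] at h1
    have h2 : φ (toR (c.map δ).sum) = (c.map g).sum := by
      have h3 : toR (c.map δ).sum = ((c.map δ).map (toRhom d)).sum :=
        map_list_sum (toRhom d) (c.map δ)
      have h4 : ((c.map δ).map (toRhom d)).sum = (c.map (fun e => toR (δ e))).sum := by
        rw [List.map_map]; rfl
      rw [h3, h4, map_list_sum]
      rw [List.map_map]; rfl
    rw [h2] at h1
    have h5 := mul_lt_mul_of_pos_left h1 hlen0
    rw [mul_inv_cancel_left₀ hlen0.ne'] at h5
    linarith
  -- bound along the trajectory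
  set M : ℝ := ∑ e : E, |g e| with hMdef
  have hM0 : 0 ≤ M := Finset.sum_nonneg fun e _ => abs_nonneg _
  have hM : ∀ e, |g e| ≤ M := fun e =>
    Finset.single_le_sum (fun e _ => abs_nonneg (g e)) (Finset.mem_univ e)
  set C : ℝ := (M + |u|) * (Fintype.card V) with hC
  have hbound : ∀ n : ℕ, φ (∑ k ∈ Finset.Icc 1 n, toR (δ (f k))) ≤ u * n + C := by
    intro n
    set p : List E := (List.range n).map (fun k => f (k + 1)) with hp
    have hlen : p.length = n := by simp [hp]
    have hch : p.Chain' (fun e f => t e = s f) := by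
      rw [hp, List.Chain', List.isChain_map]
      rcases n with _ | m
      · simp
      · rw [List.isChain_range_succ]
        intro k hk
        exact (htraj (k + 1)).symm
    have hsum : φ (∑ k ∈ Finset.Icc 1 n, toR (δ (f k))) = (p.map g).sum := by
      rw [map_sum]
      rw [hp, List.map_map, sum_list_range]
      have : Finset.Icc 1 n = Finset.Ico 1 (n+1) := by
        rw [Finset.Ico_add_one_right_eq_Icc]
      rw [this, Finset.sum_Ico_eq_sum_range]
      simp only [Nat.add_sub_cancel]
      refine Finset.sum_congr rfl fun k _ => ?_
      simp [hg, Function.comp, Nat.add_comm]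
    rw [hsum]
    have := sum_bound s t g M u hM0 hM hcyc n p (le_of_eq hlen) hch
    rw [hlen] at this
    exact this
  -- take limits
  have htend : Filter.Tendsto (fun n : ℕ => φ ((n : ℝ)⁻¹ • ∑ k ∈ Finset.Icc 1 n, toR (δ (f k))))
      Filter.atTop (nhds (φ x)) := (φ.continuous.tendsto x).comp hvel
  have htend2 : Filter.Tendsto (fun n : ℕ => u + C / n) Filter.atTop (nhds u) := by
    have := tendsto_const_div_atTop_nhds_zero_nat C
    have h := Filter.Tendsto.add (tendsto_const_nhds (x := u) (f := Filter.atTop)) this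
    simpa using h
  have hle : φ x ≤ u := by
    refine le_of_tendsto_of_tendsto htend htend2 ?_
    filter_upwards [Filter.eventually_ge_atTop 1] with n hn
    have hn0 : (0:ℝ) < n := by exact_mod_cast hn
    rw [map_smul, smul_eq_mul]
    have := hbound n
    rw [div_eq_mul_inv]
    calc (n:ℝ)⁻¹ * φ (∑ k ∈ Finset.Icc 1 n, toR (δ (f k)))
        ≤ (n:ℝ)⁻¹ * (u * n + C) := by
          apply mul_le_mul_of_nonneg_left this (by positivity)
      _ = u + C * (n:ℝ)⁻¹ := by
          rw [mul_add, mul_comm u (n:ℝ), inv_mul_cancel_left₀ hn0.ne', mul_comm]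
  exact absurd hux (not_lt.2 hle)

lemma basic_subset {d : ℕ} [Fintype E] (δ : E → Fin d → ℤ) :
    basicVelocities s t δ ⊆ velocitySet s t δ := by
  rintro x ⟨c, hc, rfl⟩
  have key : ∃ f : ℕ → E, IsTrajectory s t f ∧
      Filter.Tendsto (fun n : ℕ => (n : ℝ)⁻¹ • ∑ k ∈ Finset.Icc 1 n, toR (δ (f k)))
        Filter.atTop (nhds ((c.length : ℝ)⁻¹ • toR (c.map δ).sum)) := by
    obtain ⟨hne, hch, hclose, -⟩ := hc
    set m := c.length with hm
    have hm0 : 0 < m := List.length_pos_iff.2 hne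
    set f : ℕ → E := fun n => c.get ⟨n % m, Nat.mod_lt n hm0⟩ with hf
    have htraj : IsTrajectory s t f := by
      intro n
      have hmod : n % m < m := Nat.mod_lt n hm0
      have hkey : (n % m + 1) % m = (n + 1) % m := Nat.mod_add_mod n m 1
      by_cases h : n % m + 1 < m
      · have h1 : (n + 1) % m = n % m + 1 := by rw [← hkey, Nat.mod_eq_of_lt h]
        have := List.isChain_iff_getElem.1 hch (n % m) (by omega)
        have hg : c.get ⟨(n + 1) % m, Nat.mod_lt _ hm0⟩ = c.get ⟨n % m + 1, by omega⟩ := by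
          congr 1
          exact Fin.ext h1
        simp only [hf]
        rw [hg]
        exact this.symm
      · have h2 : n % m + 1 = m := by omega
        have h1 : (n + 1) % m = 0 := by rw [← hkey, h2, Nat.mod_self]
        simp only [hf, h1]
        rw [List.get_mk_zero (by omega), hclose]
        have hg2 : c.get ⟨n % m, Nat.mod_lt n hm0⟩ = c.getLast hne := by
          rw [List.getLast_eq_getElem]
          rw [List.get_eq_getElem]
          congr 1
          simp only [← hm]; omega
        rw [hg2]
    refine ⟨f, htraj, ?_⟩
    -- setup
    have getc : ∀ (i j : ℕ) (hi : i < c.length) (hj : j < c.length), i = j →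
        c.get ⟨i, hi⟩ = c.get ⟨j, hj⟩ := by
      intro i j hi hj hij; subst hij; rfl
    set w : ℕ → EuclideanSpace ℝ (Fin d) := fun k => toR (δ (f k)) with hw
    have hper : ∀ k, w (k + m) = w k := by
      intro k
      simp only [hw, hf]
      exact congrArg (fun e => toR (δ e)) (getc _ _ _ _ (Nat.add_mod_right k m))
    set T : EuclideanSpace ℝ (Fin d) := ∑ k ∈ Finset.range m, w k with hT
    have hTval : T = toR (c.map δ).sum := by
      have h3 : toR (c.map δ).sum = ((c.map δ).map (toRhom d)).sum :=
        map_list_sum (toRhom d) (c.map δ)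
      have h4 : ((c.map δ).map (toRhom d)).sum = (c.map fun e => toR (δ e)).sum := by
        rw [List.map_map]; rfl
      have h5 : c.map (fun e => toR (δ e)) = (List.range m).map (fun k => w k) := by
        refine List.ext_get (by simp [hm]) fun k h1 h2 => ?_
        simp only [List.get_eq_getElem, List.getElem_map, List.getElem_range]
        simp only [hw, hf]
        exact congrArg (fun e => toR (δ e)) (getc _ _ _ _ ((Nat.mod_eq_of_lt (by simpa using h1)).symm))
      rw [h3, h4, h5, sum_list_range]
    -- window sums are constant
    have hA : ∀ n : ℕ, ∑ k ∈ Finset.range m, w (n + k) = T := by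
      intro n
      induction n with
      | zero => simp [hT]
      | succ n ihn =>
        have h6 := Finset.sum_range_succ' (fun k => w (n + k)) m
        rw [Finset.sum_range_succ] at h6
        have h7 : ∀ k, n + (k + 1) = (n + 1) + k := by omega
        have h8 : w (n + m) = w n := hper n
        have h9 : ∑ k ∈ Finset.range m, w (n + (k + 1)) = ∑ k ∈ Finset.range m, w (n + 1 + k) :=
          Finset.sum_congr rfl fun k _ => by rw [h7 k]
        rw [h9, h8, ihn, Nat.add_zero] at h6
        exact (add_right_cancel h6.symm)
    -- partial sums
    set S : ℕ → EuclideanSpace ℝ (Fin d) := fun n => ∑ k ∈ Finset.Icc 1 n, w k with hS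
    have hstep : ∀ n, S (n + m) = S n + T := by
      intro n
      have h1 : Finset.Icc 1 (n + m) = Finset.Ioc 0 (n + m) := Finset.Icc_add_one_left_eq_Ioc 0 (n+m)
      have h2 : Finset.Icc 1 n = Finset.Ioc 0 n := Finset.Icc_add_one_left_eq_Ioc 0 n
      have h3 := Finset.sum_Ioc_consecutive w (Nat.zero_le n) (Nat.le_add_right n m)
      have h4 : ∑ k ∈ Finset.Ioc n (n + m), w k = T := by
        rw [← Finset.Ico_add_one_add_one_eq_Ioc, Finset.sum_Ico_eq_sum_range]
        have he : n + m + 1 - (n + 1) = m := by omega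
        rw [he]
        exact hA (n + 1)
      simp only [hS, h1, h2]
      rw [← h3, h4]
    have hdecomp : ∀ n, S n = (n / m) • T + S (n % m) := by
      intro n
      induction n using Nat.strong_induction_on with
      | _ n ih =>
      by_cases h : n < m
      · rw [Nat.div_eq_of_lt h, Nat.mod_eq_of_lt h]; simp
      · push_neg at h
        obtain ⟨k, rfl⟩ : ∃ k, n = k + m := ⟨n - m, by omega⟩
        rw [hstep k, ih k (by omega), Nat.add_div_right k hm0, Nat.add_mod_right k m, succ_nsmul]
        abel
    -- bounds
    set W : ℝ := ∑ e : E, ‖toR (δ e)‖ with hWd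
    have hW0 : 0 ≤ W := Finset.sum_nonneg fun e _ => norm_nonneg _
    have hwb : ∀ k, ‖w k‖ ≤ W := fun k =>
      Finset.single_le_sum (f := fun e => ‖toR (δ e)‖) (fun e _ => norm_nonneg _)
        (Finset.mem_univ (f k))
    have hSb : ∀ r : ℕ, r ≤ m → ‖S r‖ ≤ m * W := by
      intro r hr
      have hrc : (r:ℝ) ≤ m := by exact_mod_cast hr
      have hr0 : (0:ℝ) ≤ (r:ℝ) := by positivity
      calc ‖S r‖ ≤ ∑ k ∈ Finset.Icc 1 r, ‖w k‖ := norm_sum_le _ _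
        _ ≤ ∑ _k ∈ Finset.Icc 1 r, W := Finset.sum_le_sum fun k _ => hwb k
        _ = r * W := by rw [Finset.sum_const, Nat.card_Icc]; simp [nsmul_eq_mul]
        _ ≤ m * W := by nlinarith
    have hbound : ∀ n : ℕ, 1 ≤ n →
        dist ((n:ℝ)⁻¹ • S n) ((m:ℝ)⁻¹ • T) ≤ (‖T‖ + m * W) / n := by
      intro n hn
      have hn0 : (0:ℝ) < n := by exact_mod_cast hn
      have hm0' : (0:ℝ) < m := by exact_mod_cast hm0
      set q := n / m with hq
      set r := n % m with hr
      have hnm : m * q + r = n := Nat.div_add_mod n m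
      have hrm : r < m := Nat.mod_lt n hm0
      have hcast : (n:ℝ) = m * q + r := by exact_mod_cast hnm.symm
      have hD : (n:ℝ)⁻¹ • S n - (m:ℝ)⁻¹ • T
          = ((n:ℝ)⁻¹ * q - (m:ℝ)⁻¹) • T + (n:ℝ)⁻¹ • S r := by
        rw [hdecomp n, ← hq, ← hr, smul_add, ← Nat.cast_smul_eq_nsmul ℝ q T, smul_smul, sub_smul]
        abel
      rw [dist_eq_norm, hD]
      have hsc : (n:ℝ)⁻¹ * q - (m:ℝ)⁻¹ = -(r:ℝ) / (n * m) := by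
        field_simp
        nlinarith [hcast]
      calc ‖((n:ℝ)⁻¹ * q - (m:ℝ)⁻¹) • T + (n:ℝ)⁻¹ • S r‖
          ≤ ‖((n:ℝ)⁻¹ * q - (m:ℝ)⁻¹) • T‖ + ‖(n:ℝ)⁻¹ • S r‖ := norm_add_le _ _
        _ = |(n:ℝ)⁻¹ * q - (m:ℝ)⁻¹| * ‖T‖ + (n:ℝ)⁻¹ * ‖S r‖ := by
            rw [norm_smul, norm_smul, Real.norm_eq_abs, Real.norm_eq_abs,
              abs_of_nonneg (by positivity : (0:ℝ) ≤ (n:ℝ)⁻¹)]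
        _ ≤ (n:ℝ)⁻¹ * ‖T‖ + (n:ℝ)⁻¹ * (m * W) := by
            have h1 : |(n:ℝ)⁻¹ * q - (m:ℝ)⁻¹| ≤ (n:ℝ)⁻¹ := by
              rw [hsc, abs_div, abs_neg,
                abs_of_nonneg (by positivity : (0:ℝ) ≤ (r:ℝ)),
                abs_of_pos (by positivity : (0:ℝ) < (n:ℝ) * m),
                div_le_iff₀ (by positivity)]
              have hrc : (r:ℝ) ≤ m := by exact_mod_cast hrm.le
              calc (r:ℝ) ≤ (m:ℝ) := hrc
                _ = (n:ℝ)⁻¹ * ((n:ℝ) * m) := by field_simp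
            exact add_le_add (mul_le_mul_of_nonneg_right h1 (norm_nonneg _))
              (mul_le_mul_of_nonneg_left (hSb r hrm.le) (by positivity))
        _ = (‖T‖ + m * W) / n := by field_simp
    have final : Filter.Tendsto (fun n : ℕ => dist ((n:ℝ)⁻¹ • S n) ((m:ℝ)⁻¹ • T))
        Filter.atTop (nhds 0) := by
      refine squeeze_zero' (Filter.Eventually.of_forall fun n => dist_nonneg) ?_
        (tendsto_const_div_atTop_nhds_zero_nat (‖T‖ + m * W))
      filter_upwards [Filter.eventually_ge_atTop 1] with n hn
      exact hbound n hn
    rw [← hTval, tendsto_iff_dist_tendsto_zero]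
    exact final
  obtain ⟨f, h1, h2⟩ := key
  exact ⟨f, h1, h2⟩

lemma sphere_extreme {X : Type*} [NormedAddCommGroup X] [InnerProductSpace ℝ X]
    {r : ℝ} (hr : 0 < r) {x : X} (hx : ‖x‖ = r) :
    x ∈ Set.extremePoints ℝ (Metric.closedBall (0:X) r) := by
  rw [mem_extremePoints]
  refine ⟨by simp [mem_closedBall_zero_iff, hx.le], ?_⟩
  intro x₁ h₁ x₂ h₂ hseg
  by_cases h : x₁ = x₂
  · subst h
    rw [openSegment_same] at hseg
    simp only [Set.mem_singleton_iff] at hseg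
    exact ⟨hseg.symm, hseg.symm⟩
  · exfalso
    have hint : x ∈ interior (Metric.closedBall (0:X) r) :=
      (strictConvex_closedBall ℝ (0:X) r).openSegment_subset h₁ h₂ h hseg
    rw [interior_closedBall _ hr.ne'] at hint
    rw [mem_ball_zero_iff, hx] at hint
    exact lt_irrefl r hint

end Aux

/-- No-go theorem for isotropy: for `d ≥ 2` and `G` strongly connected, the set
of velocities of trajectories of a displacement graph is never ellipsoidal:
no invertible linear image of it is a closed Euclidean ball of positive radius. -/
theorem stmt19 {d : ℕ} (hd : 2 ≤ d) {V E : Type*} [Fintype V] [Nonempty V] [Fintype E]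
    (s t : E → V) (δ : E → Fin d → ℤ) (hconn : StronglyConnected s t) :
    ¬ ∃ (L : EuclideanSpace ℝ (Fin d) →ₗ[ℝ] EuclideanSpace ℝ (Fin d)) (r : ℝ),
        Function.Bijective L ∧ 0 < r ∧
        L '' velocitySet s t δ = Metric.closedBall 0 r := by
  rintro ⟨L, r, hLbij, hr, hball⟩
  set A := velocitySet s t δ with hA
  set F := basicVelocities s t δ with hF
  have hFfin : F.Finite := basic_finite s t δ
  have h1 : A ⊆ convexHull ℝ F := vel_subset s t δ
  have h2 : F ⊆ A := basic_subset s t δ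
  have hApre : A = ⇑L ⁻¹' (Metric.closedBall 0 r) := by
    ext x
    constructor
    · intro hx
      rw [Set.mem_preimage, ← hball]
      exact Set.mem_image_of_mem _ hx
    · intro hx
      rw [Set.mem_preimage, ← hball] at hx
      obtain ⟨y, hy, hyx⟩ := hx
      rwa [← hLbij.1 hyx]
  have hAconv : Convex ℝ A := by
    rw [hApre]
    exact (convex_closedBall _ _).linear_preimage L
  have hAeq : A = convexHull ℝ F := subset_antisymm h1 (convexHull_min h2 hAconv)
  have hball' : Metric.closedBall (0 : EuclideanSpace ℝ (Fin d)) r = convexHull ℝ (⇑L '' F) := by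
    rw [← hball, hAeq, L.image_convexHull]
  have key : ∀ x : EuclideanSpace ℝ (Fin d), ‖x‖ = r → x ∈ ⇑L '' F := by
    intro x hx
    have hex := sphere_extreme hr hx
    rw [hball'] at hex
    exact extremePoints_convexHull_subset hex
  -- construct infinitely many points of norm r
  have hd0 : 0 < d := by omega
  have hd1 : 1 < d := by omega
  set i0 : Fin d := ⟨0, hd0⟩ with hi0
  set i1 : Fin d := ⟨1, hd1⟩ with hi1
  have h01 : i0 ≠ i1 := by simp [hi0, hi1, Fin.ext_iff]
  set φ : ℝ → EuclideanSpace ℝ (Fin d) := fun a =>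
    EuclideanSpace.single i0 a +
      EuclideanSpace.single i1 (Real.sqrt (r^2 - a^2)) with hφ
  have hφnorm : ∀ a ∈ Set.Icc (0:ℝ) r, ‖φ a‖ = r := by
    rintro a ⟨ha0, har⟩
    have hsq : (0:ℝ) ≤ r^2 - a^2 := by nlinarith
    have hi : inner ℝ (EuclideanSpace.single i0 a)
        (EuclideanSpace.single i1 (Real.sqrt (r^2 - a^2))) = (0:ℝ) := by
      rw [EuclideanSpace.inner_single_left]
      simp [EuclideanSpace.single_apply, h01]
    have hns : ‖φ a‖^2 = r^2 := by
      rw [hφ]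
      rw [norm_add_sq_real, hi]
      rw [EuclideanSpace.norm_single, EuclideanSpace.norm_single]
      rw [Real.norm_eq_abs, Real.norm_eq_abs, abs_of_nonneg ha0,
        abs_of_nonneg (Real.sqrt_nonneg _), Real.sq_sqrt hsq]
      ring
    have := congrArg Real.sqrt hns
    rwa [Real.sqrt_sq (norm_nonneg _), Real.sqrt_sq hr.le] at this
  have hφinj : Set.InjOn φ (Set.Icc (0:ℝ) r) := by
    intro a _ b _ hab
    have := congrArg (fun v : EuclideanSpace ℝ (Fin d) => v i0) hab
    simpa [hφ, EuclideanSpace.single_apply, h01, PiLp.add_apply] using this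
  have hmaps : Set.MapsTo φ (Set.Icc (0:ℝ) r) (⇑L '' F) :=
    fun a ha => key _ (hφnorm a ha)
  have hinf : (⇑L '' F).Infinite :=
    Set.infinite_of_injOn_mapsTo hφinj hmaps (Set.infinite_coe_iff.mp (Set.Icc.infinite hr))
  exact hinf (hFfin.image _)
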